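/- Let f : ℝ^d → ℝ be differentiable and L-smooth, h : ℝ^d → ℝ convex, and P = f + h. Fix x, v ∈ ℝ^d and let y⁺ be a minimizer of y ↦ 2L‖y − x‖² + ⟨v, y⟩ + h(y). Then P(x) − P(y⁺) ≥ −(2L‖y⁺ − x‖² + ⟨v, y⁺ − x⟩ + h(y⁺) − h(x)) − (1/(6L))‖∇f(x) − v‖². -/

import Mathlib

open scoped RealInnerProductSpace

section Descent

variable {d : ℕ}

/-- The descent lemma: an `L`-smooth function is bounded above by its first-order
Taylor expansion plus `L/2 ‖y - x‖²`. -/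
lemma descent_lemma_aux (L : ℝ) (hL : 0 < L)
    (f : EuclideanSpace ℝ (Fin d) → ℝ)
    (gf : EuclideanSpace ℝ (Fin d) → EuclideanSpace ℝ (Fin d))
    (hgrad : ∀ x, HasGradientAt f (gf x) x)
    (hsmooth : ∀ x y, ‖gf x - gf y‖ ≤ L * ‖x - y‖)
    (x y : EuclideanSpace ℝ (Fin d)) :
    f y ≤ f x + ⟪gf x, y - x⟫ + L / 2 * ‖y - x‖ ^ 2 := by
  set u := y - x with hu
  set c : ℝ → EuclideanSpace ℝ (Fin d) := fun t => x + t • u with hc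
  have hcderiv : ∀ t : ℝ, HasDerivAt c u t := by
    intro t
    simpa [hc] using ((hasDerivAt_id t).smul_const u).const_add x
  have hgfcont : Continuous gf := by
    have : LipschitzWith (Real.toNNReal L) gf := by
      apply LipschitzWith.of_dist_le_mul
      intro a b
      rw [dist_eq_norm, dist_eq_norm, Real.coe_toNNReal _ hL.le]
      exact hsmooth a b
    exact this.continuous
  have hφderiv : ∀ t : ℝ, HasDerivAt (fun s => f (c s)) ⟪gf (c t), u⟫ t := by
    intro t
    have h1 : HasFDerivAt f ((InnerProductSpace.toDual ℝ _) (gf (c t))) (c t) :=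
      (hgrad (c t)).hasFDerivAt
    have h2 := h1.comp_hasDerivAt t (hcderiv t)
    simp at h2
    exact h2
  have hccont : Continuous c := continuous_const.add (continuous_id.smul continuous_const)
  have hcont : Continuous fun t : ℝ => ⟪gf (c t), u⟫ :=
    (hgfcont.comp hccont).inner continuous_const
  have hint : IntervalIntegrable (fun t : ℝ => ⟪gf (c t), u⟫)
      MeasureTheory.volume 0 1 := hcont.intervalIntegrable 0 1
  have heq : ∫ t in (0:ℝ)..1, ⟪gf (c t), u⟫ = f (c 1) - f (c 0) :=
    intervalIntegral.integral_eq_sub_of_hasDerivAt (fun t _ => hφderiv t) hint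
  have hc0 : c 0 = x := by simp [hc]
  have hc1 : c 1 = y := by simp [hc, hu]
  have hbound : ∀ t ∈ Set.Icc (0:ℝ) 1, ⟪gf (c t), u⟫ ≤ ⟪gf x, u⟫ + L * t * ‖u‖ ^ 2 := by
    intro t ht
    have h1 : ⟪gf (c t) - gf x, u⟫ ≤ ‖gf (c t) - gf x‖ * ‖u‖ :=
      real_inner_le_norm _ _
    have h2 : ‖gf (c t) - gf x‖ ≤ L * (t * ‖u‖) := by
      have := hsmooth (c t) x
      have h3 : ‖c t - x‖ = t * ‖u‖ := by
        simp [hc, norm_smul, abs_of_nonneg ht.1]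
      rw [h3] at this; linarith
    have h4 : ⟪gf (c t) - gf x, u⟫ ≤ L * t * ‖u‖ ^ 2 := by
      calc ⟪gf (c t) - gf x, u⟫ ≤ ‖gf (c t) - gf x‖ * ‖u‖ := h1
        _ ≤ L * (t * ‖u‖) * ‖u‖ :=
          mul_le_mul_of_nonneg_right h2 (norm_nonneg _)
        _ = L * t * ‖u‖ ^ 2 := by ring
    have h5 : ⟪gf (c t), u⟫ = ⟪gf x, u⟫ + ⟪gf (c t) - gf x, u⟫ := by
      rw [inner_sub_left]; ring
    linarith
  have hmono : ∫ t in (0:ℝ)..1, ⟪gf (c t), u⟫ ≤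
      ∫ t in (0:ℝ)..1, (⟪gf x, u⟫ + L * t * ‖u‖ ^ 2) := by
    apply intervalIntegral.integral_mono_on zero_le_one hint
    · exact (Continuous.intervalIntegrable (by fun_prop) 0 1)
    · exact hbound
  have hval : ∫ t in (0:ℝ)..1, (⟪gf x, u⟫ + L * t * ‖u‖ ^ 2) =
      ⟪gf x, u⟫ + L / 2 * ‖u‖ ^ 2 := by
    rw [intervalIntegral.integral_add
      (continuous_const.intervalIntegrable 0 1)
      (Continuous.intervalIntegrable (by fun_prop) 0 1)]
    have : ∫ t in (0:ℝ)..1, L * t * ‖u‖ ^ 2 = L / 2 * ‖u‖ ^ 2 := by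
      have : (fun t : ℝ => L * t * ‖u‖ ^ 2) = fun t : ℝ => (L * ‖u‖ ^ 2) * t := by
        funext t; ring
      rw [this, intervalIntegral.integral_const_mul, integral_id]
      ring
    rw [this]
    simp
  rw [hc0, hc1] at heq
  rw [heq] at hmono
  linarith [hmono.trans (le_of_eq hval)]

end Descent

/-- **Progress of the inexact gradient step (Lemma 6 of the supplementary).** For `f`
differentiable and `L`-smooth, `h` convex, `P = f + h`, and `y⁺` a minimizer of
`y ↦ 2L‖y - x‖² + ⟨v, y⟩ + h(y)`, we have
`P(x) - P(y⁺) ≥ -(2L‖y⁺ - x‖² + ⟨v, y⁺ - x⟩ + h(y⁺) - h(x)) - (1/(6L))‖∇f(x) - v‖²`. -/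
theorem inexact_gradient_step_progress
    {d : ℕ} (L : ℝ) (hL : 0 < L)
    (f : EuclideanSpace ℝ (Fin d) → ℝ)
    (gf : EuclideanSpace ℝ (Fin d) → EuclideanSpace ℝ (Fin d))
    (hgrad : ∀ x, HasGradientAt f (gf x) x)
    (hsmooth : ∀ x y, ‖gf x - gf y‖ ≤ L * ‖x - y‖)
    (h : EuclideanSpace ℝ (Fin d) → ℝ) (hconv : ConvexOn ℝ Set.univ h)
    (x v yplus : EuclideanSpace ℝ (Fin d))
    (hmin : IsMinOn (fun y => 2 * L * ‖y - x‖ ^ 2 + ⟪v, y⟫ + h y) Set.univ yplus) :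
    (f x + h x) - (f yplus + h yplus) ≥
      -(2 * L * ‖yplus - x‖ ^ 2 + ⟪v, yplus - x⟫ + h yplus - h x) -
        (1 / (6 * L)) * ‖gf x - v‖ ^ 2 := by
  have hdesc := descent_lemma_aux L hL f gf hgrad hsmooth x yplus
  set u := yplus - x with hu
  set w := gf x - v with hw
  have hinner : ⟪gf x, u⟫ = ⟪v, u⟫ + ⟪w, u⟫ := by
    rw [hw, inner_sub_left]; ring
  have h1 : ⟪w, u⟫ ≤ ‖w‖ * ‖u‖ := real_inner_le_norm w u
  have hL6 : (0:ℝ) < 6 * L := by linarith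
  have h2 : ‖w‖ * ‖u‖ - 3 * L / 2 * ‖u‖ ^ 2 ≤ ‖w‖ ^ 2 / (6 * L) := by
    rw [le_div_iff₀ hL6]
    nlinarith [sq_nonneg (3 * L * ‖u‖ - ‖w‖)]
  have h3 : (1 : ℝ) / (6 * L) * ‖w‖ ^ 2 = ‖w‖ ^ 2 / (6 * L) := by ring
  rw [ge_iff_le]
  linarith [hdesc, h1, h2, hinner, h3]
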